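/- Let X = R² with the norm whose unit ball is the hexagon with vertices ±(1,1), ±(1/2,2), ±(−1,1). For the two supporting functionals corresponding to the edges meeting at the vertex (1/2,2), the minimum over the unit sphere of the maximum of their absolute values equals 4/7, and for the vertex (−1,1) it equals 9/13. -/

import Mathlib

open Metric Set

/-- Vertices of the hexagon ±(1,1), ±(1/2,2), ±(−1,1). -/
def hexVerts : Set (Fin 2 → ℝ) :=
  {![1, 1], ![1/2, 2], ![-1, 1], ![-1, -1], ![-(1/2), -2], ![1, -1]}

private lemma abs_conv {f : (Fin 2 → ℝ) → ℝ} (hf : IsLinearMap ℝ f) (c : ℝ) :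
    Convex ℝ {v : Fin 2 → ℝ | |f v| ≤ c} := by
  have : {v : Fin 2 → ℝ | |f v| ≤ c}
      = {v : Fin 2 → ℝ | f v ≤ c} ∩ {v : Fin 2 → ℝ | -c ≤ f v} := by
    ext w; simp [abs_le, and_comm]
  rw [this]
  exact (convex_halfSpace_le hf c).inter (convex_halfSpace_ge hf (-c))

private lemma hull_bound {v : Fin 2 → ℝ} (hv : v ∈ convexHull ℝ hexVerts) :
    |2 * v 0 + v 1| ≤ 3 ∧ |3 * v 1 - 2 * v 0| ≤ 5 ∧ |v 0| ≤ 1 := by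
  have l1 : IsLinearMap ℝ (fun v : Fin 2 → ℝ => 2 * v 0 + v 1) := by
    constructor <;> intros <;> simp [smul_eq_mul] <;> ring
  have l2 : IsLinearMap ℝ (fun v : Fin 2 → ℝ => 3 * v 1 - 2 * v 0) := by
    constructor <;> intros <;> simp [smul_eq_mul] <;> ring
  have l3 : IsLinearMap ℝ (fun v : Fin 2 → ℝ => v 0) := by
    constructor <;> intros <;> simp [smul_eq_mul]
  have hconv : Convex ℝ ({v : Fin 2 → ℝ | |2 * v 0 + v 1| ≤ 3} ∩
      ({v : Fin 2 → ℝ | |3 * v 1 - 2 * v 0| ≤ 5} ∩ {v : Fin 2 → ℝ | |v 0| ≤ 1})) :=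
    (abs_conv l1 3).inter ((abs_conv l2 5).inter (abs_conv l3 1))
  have h := convexHull_min ?_ hconv hv
  · exact ⟨h.1, h.2.1, h.2.2⟩
  intro w hw
  simp only [hexVerts, mem_insert_iff, mem_singleton_iff] at hw
  rcases hw with h|h|h|h|h|h <;> subst h <;>
    norm_num [Matrix.cons_val_zero, Matrix.cons_val_one, Matrix.head_cons, abs_le]

private lemma combo_mem {p q r : Fin 2 → ℝ} (hp : p ∈ hexVerts) (hq : q ∈ hexVerts)
    (hr : r ∈ hexVerts) {a b c : ℝ} (ha : 0 ≤ a) (hb : 0 ≤ b) (hc : 0 ≤ c)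
    (habc : a + b + c = 1) : a • p + b • q + c • r ∈ convexHull ℝ hexVerts := by
  have hcv := convex_convexHull ℝ hexVerts
  have hp' := subset_convexHull ℝ hexVerts hp
  have hq' := subset_convexHull ℝ hexVerts hq
  have hr' := subset_convexHull ℝ hexVerts hr
  rcases eq_or_lt_of_le (by linarith : a + b ≤ 1) with h | h
  · have hc0 : c = 0 := by linarith
    have := hcv hp' hq' ha hb h
    simpa [hc0] using this
  · rcases eq_or_lt_of_le (add_nonneg ha hb) with h0 | h0
    · have ha0 : a = 0 := by linarith
      have hb0 : b = 0 := by linarith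
      have hc1 : c = 1 := by linarith
      simpa [ha0, hb0, hc1] using hr'
    · set d := a + b with hd
      have hz : (a / d) • p + (b / d) • q ∈ convexHull ℝ hexVerts := by
        apply hcv hp' hq' (by positivity) (by positivity)
        field_simp
        exact hd.symm
      have := hcv hz hr' (by positivity : (0:ℝ) ≤ d) hc (by linarith)
      have heq : d • ((a / d) • p + (b / d) • q) + c • r = a • p + b • q + c • r := by
        rw [smul_add, smul_smul, smul_smul]
        rw [mul_div_cancel₀ _ (by linarith : d ≠ 0), mul_div_cancel₀ _ (by linarith : d ≠ 0)]
      rwa [heq] at this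

private lemma mem_hull {v : Fin 2 → ℝ} (h1 : |2 * v 0 + v 1| ≤ 3)
    (h2 : |3 * v 1 - 2 * v 0| ≤ 5) (h3 : |v 0| ≤ 1) :
    v ∈ convexHull ℝ hexVerts := by
  rw [abs_le] at h1 h2 h3
  obtain ⟨h1l, h1r⟩ := h1
  obtain ⟨h2l, h2r⟩ := h2
  obtain ⟨h3l, h3r⟩ := h3
  set x := v 0 with hx
  set y := v 1 with hy
  have hA : ![(1:ℝ), 1] ∈ hexVerts := by simp [hexVerts]
  have hB : ![(1:ℝ)/2, 2] ∈ hexVerts := by simp [hexVerts]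
  have hC : ![(-1:ℝ), 1] ∈ hexVerts := by simp [hexVerts]
  have hA' : ![(-1:ℝ), -1] ∈ hexVerts := by simp [hexVerts]
  have hB' : ![-((1:ℝ)/2), -2] ∈ hexVerts := by simp [hexVerts]
  have hC' : ![(1:ℝ), -1] ∈ hexVerts := by simp [hexVerts]
  have veq : ∀ (p q r : Fin 2 → ℝ) (a b c : ℝ),
      a * p 0 + b * q 0 + c * r 0 = x → a * p 1 + b * q 1 + c * r 1 = y →
      a • p + b • q + c • r = v := by
    intro p q r a b c h0 h1
    funext i
    fin_cases i
    · simpa [Pi.smul_apply, smul_eq_mul] using h0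
    · simpa [Pi.smul_apply, smul_eq_mul] using h1
  rcases le_total x y with hxy | hxy
  · rcases le_total y (4 * x) with h4 | h4
    · have key := combo_mem hA hB hA'
        (a := (4*x-y)/3 + (3-2*x-y)/6) (b := 2*(y-x)/3) (c := (3-2*x-y)/6)
        (by linarith) (by linarith) (by linarith) (by ring)
      rwa [veq _ _ _ _ _ _ (by norm_num; ring) (by norm_num; ring)] at key
    · rcases le_total 0 (x + y) with hs | hs
      · have key := combo_mem hB hC hB'
          (a := 2*(x+y)/5 + (5+2*x-3*y)/10) (b := (y-4*x)/5) (c := (5+2*x-3*y)/10)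
          (by linarith) (by linarith) (by linarith) (by ring)
        rwa [veq _ _ _ _ _ _ (by norm_num; ring) (by norm_num; ring)] at key
      · have key := combo_mem hC hA' hC'
          (a := (y-x)/2 + (1+x)/2) (b := -(x+y)/2) (c := (1+x)/2)
          (by linarith) (by linarith) (by linarith) (by ring)
        rwa [veq _ _ _ _ _ _ (by norm_num; ring) (by norm_num; ring)] at key
  · rcases le_total y (4 * x) with h4 | h4
    · rcases le_total 0 (x + y) with hs | hs
      · have key := combo_mem hC' hA hC
          (a := (x-y)/2 + (1-x)/2) (b := (x+y)/2) (c := (1-x)/2)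
          (by linarith) (by linarith) (by linarith) (by ring)
        rwa [veq _ _ _ _ _ _ (by norm_num; ring) (by norm_num; ring)] at key
      · have key := combo_mem hB' hC' hB
          (a := -2*(x+y)/5 + (5-2*x+3*y)/10) (b := (4*x-y)/5) (c := (5-2*x+3*y)/10)
          (by linarith) (by linarith) (by linarith) (by ring)
        rwa [veq _ _ _ _ _ _ (by norm_num; ring) (by norm_num; ring)] at key
    · have key := combo_mem hA' hB'
        hA (a := (y-4*x)/3 + (3+2*x+y)/6) (b := 2*(x-y)/3) (c := (3+2*x+y)/6)
        (by linarith) (by linarith) (by linarith) (by ring)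
      rwa [veq _ _ _ _ _ _ (by norm_num; ring) (by norm_num; ring)] at key

section Aux

variable {X : Type*} [NormedAddCommGroup X] [NormedSpace ℝ X]
  (e : X ≃ₗ[ℝ] (Fin 2 → ℝ))

private lemma ball_iff (hball : closedBall (0 : X) 1 = e ⁻¹' (convexHull ℝ hexVerts))
    (x : X) : ‖x‖ ≤ 1 ↔ e x ∈ convexHull ℝ hexVerts := by
  rw [← mem_closedBall_zero_iff, hball]; rfl

private lemma norm_le_of (hball : closedBall (0 : X) 1 = e ⁻¹' (convexHull ℝ hexVerts))
    {x : X} {c : ℝ} (hc : 0 < c)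
    (b1 : |2 * e x 0 + e x 1| ≤ 3 * c) (b2 : |3 * e x 1 - 2 * e x 0| ≤ 5 * c)
    (b3 : |e x 0| ≤ c) : ‖x‖ ≤ c := by
  have hci : (0:ℝ) < c⁻¹ := inv_pos.mpr hc
  have h0 : ∀ i, e (c⁻¹ • x) i = c⁻¹ * e x i := by
    intro i; rw [map_smul]; rfl
  have key : ‖c⁻¹ • x‖ ≤ 1 := by
    rw [ball_iff e hball]
    apply mem_hull
    · rw [h0, h0, show 2 * (c⁻¹ * e x 0) + c⁻¹ * e x 1 = c⁻¹ * (2 * e x 0 + e x 1) by ring,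
        abs_mul, abs_of_pos hci]
      calc c⁻¹ * |2 * e x 0 + e x 1| ≤ c⁻¹ * (3 * c) :=
            mul_le_mul_of_nonneg_left b1 hci.le
        _ = 3 := by field_simp
    · rw [h0, h0, show 3 * (c⁻¹ * e x 1) - 2 * (c⁻¹ * e x 0) = c⁻¹ * (3 * e x 1 - 2 * e x 0) by ring,
        abs_mul, abs_of_pos hci]
      calc c⁻¹ * |3 * e x 1 - 2 * e x 0| ≤ c⁻¹ * (5 * c) :=
            mul_le_mul_of_nonneg_left b2 hci.le
        _ = 5 := by field_simp
    · rw [h0, abs_mul, abs_of_pos hci]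
      calc c⁻¹ * |e x 0| ≤ c⁻¹ * c := mul_le_mul_of_nonneg_left b3 hci.le
        _ = 1 := by field_simp
  rw [norm_smul, Real.norm_eq_abs, abs_of_pos hci] at key
  calc ‖x‖ = c * (c⁻¹ * ‖x‖) := by field_simp
    _ ≤ c * 1 := mul_le_mul_of_nonneg_left key hc.le
    _ = c := mul_one c

private lemma norm_ge_of (hball : closedBall (0 : X) 1 = e ⁻¹' (convexHull ℝ hexVerts))
    (x : X) : |2 * e x 0 + e x 1| ≤ 3 * ‖x‖ ∧
    |3 * e x 1 - 2 * e x 0| ≤ 5 * ‖x‖ ∧ |e x 0| ≤ ‖x‖ := by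
  rcases eq_or_ne x 0 with rfl | hx
  · simp
  · have hn : 0 < ‖x‖ := norm_pos_iff.mpr hx
    have hni : (0:ℝ) < ‖x‖⁻¹ := inv_pos.mpr hn
    have h1 : ‖(‖x‖)⁻¹ • x‖ ≤ 1 := by
      rw [norm_smul, Real.norm_eq_abs, abs_of_pos hni]
      rw [inv_mul_cancel₀ hn.ne']
    have hb := hull_bound ((ball_iff e hball _).mp h1)
    have h0 : ∀ i, e ((‖x‖)⁻¹ • x) i = ‖x‖⁻¹ * e x i := by
      intro i; rw [map_smul]; rfl
    rw [h0, h0] at hb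
    obtain ⟨hb1, hb2, hb3⟩ := hb
    rw [show 2 * (‖x‖⁻¹ * e x 0) + ‖x‖⁻¹ * e x 1 = ‖x‖⁻¹ * (2 * e x 0 + e x 1) by ring,
      abs_mul, abs_of_pos hni] at hb1
    rw [show 3 * (‖x‖⁻¹ * e x 1) - 2 * (‖x‖⁻¹ * e x 0) = ‖x‖⁻¹ * (3 * e x 1 - 2 * e x 0) by ring,
      abs_mul, abs_of_pos hni] at hb2
    rw [abs_mul, abs_of_pos hni] at hb3
    refine ⟨?_, ?_, ?_⟩
    · have := mul_le_mul_of_nonneg_left hb1 hn.le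
      rw [← mul_assoc, mul_inv_cancel₀ hn.ne', one_mul] at this
      linarith
    · have := mul_le_mul_of_nonneg_left hb2 hn.le
      rw [← mul_assoc, mul_inv_cancel₀ hn.ne', one_mul] at this
      linarith
    · have := mul_le_mul_of_nonneg_left hb3 hn.le
      rw [← mul_assoc, mul_inv_cancel₀ hn.ne', one_mul] at this
      linarith

private lemma geval (g : X →L[ℝ] ℝ) (p q : Fin 2 → ℝ)
    (hgp : g (e.symm p) = 1) (hgq : g (e.symm q) = 1) (x : X) (α β : ℝ)
    (hx : e x = α • p + β • q) : g x = α + β := by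
  have hxx : x = α • e.symm p + β • e.symm q := by
    apply e.injective
    rw [map_add, map_smul, map_smul, e.apply_symm_apply, e.apply_symm_apply, hx]
  rw [hxx, map_add, map_smul, map_smul, hgp, hgq, smul_eq_mul, smul_eq_mul, mul_one, mul_one]

end Aux

theorem stmt_18 {X : Type*} [NormedAddCommGroup X] [NormedSpace ℝ X]
    (e : X ≃ₗ[ℝ] (Fin 2 → ℝ))
    (hball : closedBall (0 : X) 1 = e ⁻¹' (convexHull ℝ hexVerts)) :
    (∀ g₁ g₂ : X →L[ℝ] ℝ, ‖g₁‖ = 1 → ‖g₂‖ = 1 →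
      (∀ x : X, e x ∈ segment ℝ ![(1:ℝ), 1] ![1/2, 2] → g₁ x = 1) →
      (∀ x : X, e x ∈ segment ℝ ![(1/2 : ℝ), 2] ![-1, 1] → g₂ x = 1) →
      sInf {t : ℝ | ∃ x : X, ‖x‖ = 1 ∧ t = max |g₁ x| |g₂ x|} = 4 / 7) ∧
    (∀ g₁ g₂ : X →L[ℝ] ℝ, ‖g₁‖ = 1 → ‖g₂‖ = 1 →
      (∀ x : X, e x ∈ segment ℝ ![(1/2 : ℝ), 2] ![-1, 1] → g₁ x = 1) →
      (∀ x : X, e x ∈ segment ℝ ![(-1 : ℝ), 1] ![-1, -1] → g₂ x = 1) →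
      sInf {t : ℝ | ∃ x : X, ‖x‖ = 1 ∧ t = max |g₁ x| |g₂ x|} = 9 / 13) := by
  constructor
  · intro g₁ g₂ _ _ hseg1 hseg2
    have hA1 : g₁ (e.symm ![1, 1]) = 1 := by
      apply hseg1
      rw [e.apply_symm_apply]
      exact left_mem_segment ℝ _ _
    have hB1 : g₁ (e.symm ![1/2, 2]) = 1 := by
      apply hseg1
      rw [e.apply_symm_apply]
      exact right_mem_segment ℝ _ _
    have hB2 : g₂ (e.symm ![1/2, 2]) = 1 := by
      apply hseg2
      rw [e.apply_symm_apply]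
      exact left_mem_segment ℝ _ _
    have hC2 : g₂ (e.symm ![-1, 1]) = 1 := by
      apply hseg2
      rw [e.apply_symm_apply]
      exact right_mem_segment ℝ _ _
    have hg1 : ∀ x : X, g₁ x = (2 * e x 0 + e x 1) / 3 := by
      intro x
      have h := geval e g₁ ![1, 1] ![1/2, 2] hA1 hB1 x
        ((4 * e x 0 - e x 1) / 3) (2 * (e x 1 - e x 0) / 3) ?_
      · rw [h]; ring
      · funext i
        fin_cases i <;>
          simp [Pi.smul_apply, smul_eq_mul, Matrix.cons_val_zero, Matrix.cons_val_one,
            Matrix.head_cons] <;> ring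
    have hg2 : ∀ x : X, g₂ x = (3 * e x 1 - 2 * e x 0) / 5 := by
      intro x
      have h := geval e g₂ ![1/2, 2] ![-1, 1] hB2 hC2 x
        (2 * (e x 0 + e x 1) / 5) ((e x 1 - 4 * e x 0) / 5) ?_
      · rw [h]; ring
      · funext i
        fin_cases i <;>
          simp [Pi.smul_apply, smul_eq_mul, Matrix.cons_val_zero, Matrix.cons_val_one,
            Matrix.head_cons] <;> ring
    apply IsLeast.csInf_eq
    constructor
    · refine ⟨e.symm ![1, -(2/7)], ?_, ?_⟩
      · have hc0 : e (e.symm ![(1:ℝ), -(2/7)]) 0 = 1 := by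
          rw [e.apply_symm_apply]; norm_num
        have hc1 : e (e.symm ![(1:ℝ), -(2/7)]) 1 = -(2/7) := by
          rw [e.apply_symm_apply]; norm_num
        apply le_antisymm
        · apply norm_le_of e hball one_pos <;> simp only [hc0, hc1] <;> norm_num [abs_le]
        · have h3 := (norm_ge_of e hball (e.symm ![(1:ℝ), -(2/7)])).2.2
          rw [hc0] at h3
          simpa using h3
      · have hc0 : e (e.symm ![(1:ℝ), -(2/7)]) 0 = 1 := by
          rw [e.apply_symm_apply]; norm_num
        have hc1 : e (e.symm ![(1:ℝ), -(2/7)]) 1 = -(2/7) := by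
          rw [e.apply_symm_apply]; norm_num
        rw [hg1, hg2, hc0, hc1]
        norm_num
    · rintro t ⟨x, hx1, rfl⟩
      rw [hg1 x, hg2 x]
      set a := e x 0 with ha
      set b := e x 1 with hb
      set u := (2 * a + b) / 3 with hu
      set w := (3 * b - 2 * a) / 5 with hw
      set M := max |u| |w| with hM
      have hMu : |u| ≤ M := le_max_left _ _
      have hMw : |w| ≤ M := le_max_right _ _
      have hM0 : 0 ≤ M := le_trans (abs_nonneg u) hMu
      have haid : |a| ≤ 9/8 * |u| + 5/8 * |w| := by
        calc |a| = |9/8 * u - 5/8 * w| := by rw [hu, hw]; ring_nf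
          _ ≤ |9/8 * u| + |5/8 * w| := abs_sub _ _
          _ = 9/8 * |u| + 5/8 * |w| := by
              rw [abs_mul, abs_mul, show |(9:ℝ)/8| = 9/8 from by norm_num,
                show |(5:ℝ)/8| = 5/8 from by norm_num]
      have hMpos : 0 < M := by
        rcases lt_or_eq_of_le hM0 with h | h
        · exact h
        · exfalso
          have hu0 : u = 0 := by
            have := hMu; rw [← h] at this
            have := abs_nonpos_iff.mp this; exact this
          have hw0 : w = 0 := by
            have := hMw; rw [← h] at this
            exact abs_nonpos_iff.mp this
          have ha0 : a = 0 := by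
            rw [hu] at hu0; rw [hw] at hw0; linarith
          have hb0 : b = 0 := by
            rw [hu] at hu0; rw [hw] at hw0; linarith
          have hex : e x = 0 := by
            funext i; fin_cases i
            · simpa using ha0
            · simpa using hb0
          have : x = 0 := by
            have := e.map_eq_zero_iff.mp hex
            exact this
          rw [this, norm_zero] at hx1
          norm_num at hx1
      have hb1 : |2 * a + b| ≤ 3 * (7/4 * M) := by
        have h3u : 2 * a + b = 3 * u := by rw [hu]; ring
        rw [h3u, abs_mul]
        rw [show |(3:ℝ)| = 3 by norm_num]
        linarith
      have hb2 : |3 * b - 2 * a| ≤ 5 * (7/4 * M) := by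
        have h5w : 3 * b - 2 * a = 5 * w := by rw [hw]; ring
        rw [h5w, abs_mul]
        rw [show |(5:ℝ)| = 5 by norm_num]
        linarith
      have hb3 : |a| ≤ 7/4 * M := by linarith
      have hle := norm_le_of e hball (by linarith : (0:ℝ) < 7/4 * M) hb1 hb2 hb3
      rw [hx1] at hle
      linarith
  · intro g₁ g₂ _ _ hseg1 hseg2
    have hB1 : g₁ (e.symm ![1/2, 2]) = 1 := by
      apply hseg1
      rw [e.apply_symm_apply]
      exact left_mem_segment ℝ _ _
    have hC1 : g₁ (e.symm ![-1, 1]) = 1 := by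
      apply hseg1
      rw [e.apply_symm_apply]
      exact right_mem_segment ℝ _ _
    have hC2 : g₂ (e.symm ![-1, 1]) = 1 := by
      apply hseg2
      rw [e.apply_symm_apply]
      exact left_mem_segment ℝ _ _
    have hD2 : g₂ (e.symm ![-1, -1]) = 1 := by
      apply hseg2
      rw [e.apply_symm_apply]
      exact right_mem_segment ℝ _ _
    have hg1 : ∀ x : X, g₁ x = (3 * e x 1 - 2 * e x 0) / 5 := by
      intro x
      have h := geval e g₁ ![1/2, 2] ![-1, 1] hB1 hC1 x
        (2 * (e x 0 + e x 1) / 5) ((e x 1 - 4 * e x 0) / 5) ?_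
      · rw [h]; ring
      · funext i
        fin_cases i <;>
          simp [Pi.smul_apply, smul_eq_mul, Matrix.cons_val_zero, Matrix.cons_val_one,
            Matrix.head_cons] <;> ring
    have hg2 : ∀ x : X, g₂ x = -(e x 0) := by
      intro x
      have h := geval e g₂ ![-1, 1] ![-1, -1] hC2 hD2 x
        ((e x 1 - e x 0) / 2) (-(e x 0 + e x 1) / 2) ?_
      · rw [h]; ring
      · funext i
        fin_cases i <;>
          simp [Pi.smul_apply, smul_eq_mul, Matrix.cons_val_zero, Matrix.cons_val_one,
            Matrix.head_cons] <;> ring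
    apply IsLeast.csInf_eq
    constructor
    · refine ⟨e.symm ![9/13, 21/13], ?_, ?_⟩
      · have hc0 : e (e.symm ![(9:ℝ)/13, 21/13]) 0 = 9/13 := by
          rw [e.apply_symm_apply]; norm_num
        have hc1 : e (e.symm ![(9:ℝ)/13, 21/13]) 1 = 21/13 := by
          rw [e.apply_symm_apply]; norm_num
        apply le_antisymm
        · apply norm_le_of e hball one_pos <;> simp only [hc0, hc1] <;> norm_num [abs_le]
        · have h3 := (norm_ge_of e hball (e.symm ![(9:ℝ)/13, 21/13])).1
          rw [hc0, hc1] at h3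
          rw [show 2 * (9/13 : ℝ) + 21/13 = 3 by norm_num] at h3
          rw [show |(3:ℝ)| = 3 by norm_num] at h3
          linarith
      · have hc0 : e (e.symm ![(9:ℝ)/13, 21/13]) 0 = 9/13 := by
          rw [e.apply_symm_apply]; norm_num
        have hc1 : e (e.symm ![(9:ℝ)/13, 21/13]) 1 = 21/13 := by
          rw [e.apply_symm_apply]; norm_num
        rw [hg1, hg2, hc0, hc1]
        norm_num
    · rintro t ⟨x, hx1, rfl⟩
      rw [hg1 x, hg2 x]
      set a := e x 0 with ha
      set b := e x 1 with hb
      set w := (3 * b - 2 * a) / 5 with hw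
      set M := max |w| |(-a)| with hM
      have hMw : |w| ≤ M := le_max_left _ _
      have hMa : |a| ≤ M := by
        rw [← abs_neg a]; exact le_max_right _ _
      have hM0 : 0 ≤ M := le_trans (abs_nonneg w) hMw
      have huid : |2 * a + b| ≤ 3 * (13/9 * M) := by
        have hid : 2 * a + b = 3 * (5/9 * w + 8/9 * a) := by rw [hw]; ring
        calc |2 * a + b| = |3 * (5/9 * w + 8/9 * a)| := by rw [← hid]
          _ = 3 * |5/9 * w + 8/9 * a| := by rw [abs_mul]; norm_num
          _ ≤ 3 * (|5/9 * w| + |8/9 * a|) := by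
              have := abs_add_le (5/9 * w) (8/9 * a); linarith
          _ = 3 * (5/9 * |w| + 8/9 * |a|) := by
              rw [abs_mul, abs_mul, show |(5:ℝ)/9| = 5/9 from by norm_num,
                show |(8:ℝ)/9| = 8/9 from by norm_num]
          _ ≤ 3 * (13/9 * M) := by linarith
      have hMpos : 0 < M := by
        rcases lt_or_eq_of_le hM0 with h | h
        · exact h
        · exfalso
          have hw0 : w = 0 := by
            have := hMw; rw [← h] at this
            exact abs_nonpos_iff.mp this
          have ha0 : a = 0 := by
            have := hMa; rw [← h] at this
            exact abs_nonpos_iff.mp this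
          have hb0 : b = 0 := by
            rw [hw] at hw0; linarith
          have hex : e x = 0 := by
            funext i; fin_cases i
            · simpa using ha0
            · simpa using hb0
          have : x = 0 := e.map_eq_zero_iff.mp hex
          rw [this, norm_zero] at hx1
          norm_num at hx1
      have hb2 : |3 * b - 2 * a| ≤ 5 * (13/9 * M) := by
        have h5w : 3 * b - 2 * a = 5 * w := by rw [hw]; ring
        rw [h5w, abs_mul]
        rw [show |(5:ℝ)| = 5 by norm_num]
        linarith
      have hb3 : |a| ≤ 13/9 * M := by linarith
      have hle := norm_le_of e hball (by linarith : (0:ℝ) < 13/9 * M) huid hb2 hb3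
      rw [hx1] at hle
      linarith
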